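/- Let H₁, H₂ be complex Hilbert spaces, D₁ ⊆ H₁ and D₂ ⊆ H₂ dense linear subspaces, and L₀ : D₁ → H₂, M₀ : D₂ → H₁ linear operators satisfying ⟨L₀u, v⟩_{H₂} = ⟨u, M₀v⟩_{H₁} for all u ∈ D₁, v ∈ D₂; let L and M denote the closures of L₀ and M₀. Then the equalities M = L* and L = M* hold if and only if ker(I_{H₂} + M*L*) = {0} and ker(I_{H₁} + L*M*) = {0}. -/

import Mathlib

open scoped InnerProductSpace

namespace Stmt4Aux

open LinearPMap

variable {E F : Type*}
  [NormedAddCommGroup E] [InnerProductSpace ℂ E] [CompleteSpace E]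
  [NormedAddCommGroup F] [InnerProductSpace ℂ F] [CompleteSpace F]

/-- Graph characterization of the adjoint. -/
lemma mem_adjoint_graph_iff (T : E →ₗ.[ℂ] F) (hT : Dense (T.domain : Set E))
    (y : F) (x : E) :
    (y, x) ∈ T.adjoint.graph ↔ ∀ v : T.domain, ⟪x, (v : E)⟫_ℂ = ⟪y, T v⟫_ℂ := by
  constructor
  · rintro hmem v
    obtain ⟨w, hw1, hw2⟩ := (mem_graph_iff _).mp hmem
    simp only at hw1 hw2
    rw [← hw2, ← hw1]
    exact LinearPMap.adjoint_isFormalAdjoint hT w v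
  · intro hmem
    have hy : y ∈ T.adjoint.domain :=
      LinearPMap.mem_adjoint_domain_of_exists y ⟨x, hmem⟩
    have hx : T.adjoint ⟨y, hy⟩ = x :=
      LinearPMap.adjoint_apply_eq hT ⟨y, hy⟩ hmem
    rw [mem_graph_iff]
    exact ⟨⟨y, hy⟩, rfl, hx⟩

/-- The adjoint of a densely defined operator is closed. -/
lemma adjoint_isClosed (T : E →ₗ.[ℂ] F) (hT : Dense (T.domain : Set E)) :
    T.adjoint.IsClosed := by
  have hset : (T.adjoint.graph : Set (F × E)) =
      ⋂ v : T.domain, {p : F × E | ⟪p.2, (v : E)⟫_ℂ - ⟪p.1, T v⟫_ℂ = 0} := by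
    ext p
    simp only [SetLike.mem_coe, Set.mem_iInter, Set.mem_setOf_eq, sub_eq_zero]
    exact (show ((p.1, p.2) : F × E) = p from rfl) ▸ mem_adjoint_graph_iff T hT p.1 p.2
  unfold LinearPMap.IsClosed
  rw [hset]
  exact isClosed_iInter fun v =>
    isClosed_eq ((continuous_snd.inner continuous_const).sub
      (continuous_fst.inner continuous_const)) continuous_const

/-- The closure of a closed operator is itself. -/
lemma closure_eq_self {T : E →ₗ.[ℂ] F} (hT : T.IsClosed) : T.closure = T := by
  have h1 : T.closure.graph = T.graph := by
    rw [← hT.isClosable.graph_closure_eq_closure_graph]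
    exact hT.submodule_topologicalClosure_eq
  exact le_antisymm (le_of_le_graph h1.le) T.le_closure

/-- The graph of `R` as a submodule of the `L²` product. -/
noncomputable def graph2 (R : F →ₗ.[ℂ] E) : Submodule ℂ (WithLp 2 (F × E)) :=
  R.graph.comap (WithLp.linearEquiv 2 ℂ (F × E) : WithLp 2 (F × E) →ₗ[ℂ] F × E)

lemma mem_graph2 (R : F →ₗ.[ℂ] E) (x : WithLp 2 (F × E)) :
    x ∈ graph2 R ↔ (x.fst, x.snd) ∈ R.graph := Iff.rfl

lemma isClosed_graph2 (R : F →ₗ.[ℂ] E) (hR : R.IsClosed) :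
    IsClosed (graph2 R : Set (WithLp 2 (F × E))) := by
  have : (graph2 R : Set (WithLp 2 (F × E))) =
      (WithLp.prodContinuousLinearEquiv 2 ℂ F E) ⁻¹' (R.graph : Set (F × E)) := rfl
  rw [this]
  exact hR.preimage (WithLp.prodContinuousLinearEquiv 2 ℂ F E).continuous

lemma mem_orthogonal_graph2 (R : F →ₗ.[ℂ] E) (hR : Dense (R.domain : Set F))
    (x : WithLp 2 (F × E)) :
    x ∈ (graph2 R)ᗮ ↔ (x.snd, -x.fst) ∈ R.adjoint.graph := by
  rw [mem_adjoint_graph_iff R hR, Submodule.mem_orthogonal]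
  constructor
  · intro hx v
    have hv : ((WithLp.equiv 2 (F × E)).symm ((v : F), R v)) ∈ graph2 R := by
      rw [mem_graph2]
      simpa using R.mem_graph v
    have := hx _ hv
    rw [WithLp.prod_inner_apply, WithLp.equiv_symm_apply, WithLp.ofLp_toLp] at this
    dsimp only at this
    have hconj := congrArg (starRingEnd ℂ) this
    rw [_root_.map_add, inner_conj_symm, inner_conj_symm, _root_.map_zero] at hconj
    rw [inner_neg_left, neg_eq_iff_add_eq_zero]
    exact hconj
  · intro hx u hu
    rw [mem_graph2, mem_graph_iff] at hu
    obtain ⟨v, hv1, hv2⟩ := hu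
    dsimp only at hv1 hv2
    have := hx v
    rw [inner_neg_left, neg_eq_iff_add_eq_zero] at this
    have hconj := congrArg (starRingEnd ℂ) this
    rw [_root_.map_add, inner_conj_symm, inner_conj_symm, _root_.map_zero] at hconj
    rw [WithLp.prod_inner_apply]
    simp only [WithLp.ofLp_fst, WithLp.ofLp_snd]
    rw [← hv1, ← hv2]
    exact hconj

/-- Key step: the adjoint of `T` is contained in `R` given the kernel condition. -/
lemma adjoint_le_of_ker (T : E →ₗ.[ℂ] F) (R : F →ₗ.[ℂ] E)
    (hTd : Dense (T.domain : Set E)) (hRd : Dense (R.domain : Set F))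
    (hRc : R.IsClosed) (hle : R ≤ T.adjoint)
    (hker : ∀ (v : R.adjoint.domain) (hv : (R.adjoint v : F) ∈ T.adjoint.domain),
      (v : E) + T.adjoint ⟨R.adjoint v, hv⟩ = 0 → (v : E) = 0) :
    T.adjoint ≤ R := by
  apply le_of_le_graph
  intro p hp
  obtain ⟨w, hw1, hw2⟩ := (mem_graph_iff _).mp hp
  have hgoal : ((w : F), T.adjoint w) ∈ R.graph → p ∈ R.graph := by
    intro hmem
    have : ((w : F), T.adjoint w) = p := Prod.ext hw1 hw2
    rwa [this] at hmem
  apply hgoal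
  -- orthogonal decomposition in the product space
  set x : WithLp 2 (F × E) := (WithLp.equiv 2 (F × E)).symm ((w : F), T.adjoint w) with hxdef
  haveI : CompleteSpace (graph2 R) := (isClosed_graph2 R hRc).completeSpace_coe
  obtain ⟨y, hy, z, hz, hxyz⟩ := (graph2 R).exists_add_mem_mem_orthogonal x
  rw [mem_graph2, mem_graph_iff] at hy
  obtain ⟨u, hu1, hu2⟩ := hy
  rw [mem_orthogonal_graph2 R hRd, mem_graph_iff] at hz
  obtain ⟨v, hv1, hv2⟩ := hz
  simp only at hu1 hu2 hv1 hv2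
  -- component equations
  have e1 : (w : F) = y.fst + z.fst := by
    have := congrArg Prod.fst (congrArg (WithLp.equiv 2 (F × E)) hxyz)
    simpa [hxdef] using this
  have e2 : T.adjoint w = y.snd + z.snd := by
    have := congrArg Prod.snd (congrArg (WithLp.equiv 2 (F × E)) hxyz)
    simpa [hxdef] using this
  -- u lies in the domain of the adjoint of T
  set u' : T.adjoint.domain := ⟨(u : F), hle.1 u.2⟩ with hu'def
  have hu' : R u = T.adjoint u' := hle.2 rfl
  -- R.adjoint v lies in the domain of T.adjoint
  have hvmem : (R.adjoint v : F) ∈ T.adjoint.domain := by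
    have : (R.adjoint v : F) = (u : F) - (w : F) := by
      rw [hv2]
      have : z.fst = (w : F) - y.fst := by rw [e1]; abel
      rw [this, hu1]; abel
    rw [this]
    exact sub_mem (hle.1 u.2) w.2
  -- the kernel condition applies to v
  have hvz : (v : E) = 0 := by
    apply hker v hvmem
    have hsub : (⟨(R.adjoint v : F), hvmem⟩ : T.adjoint.domain) = u' - w := by
      apply Subtype.ext
      simp only [AddSubgroupClass.coe_sub, hu'def]
      rw [hv2]
      have : z.fst = (w : F) - y.fst := by rw [e1]; abel
      rw [this, hu1]; abel
    rw [hsub, LinearPMap.map_sub, ← hu', hu2, e2, hv1]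
    abel
  -- hence z = 0 and the decomposition is trivial
  have hz0 : z = 0 := by
    apply (WithLp.linearEquiv 2 ℂ (F × E)).injective
    rw [_root_.map_zero]
    apply Prod.ext
    · have : v = 0 := Subtype.ext hvz
      have h0 : R.adjoint v = 0 := by rw [this, LinearPMap.map_zero]
      have : z.fst = 0 := by
        have := hv2
        rw [h0] at this
        simpa using this.symm
      simpa [WithLp.linearEquiv] using this
    · have : z.snd = 0 := by rw [← hv1, hvz]
      simpa [WithLp.linearEquiv] using this
  have hxy : x = y := by rw [hxyz, hz0, add_zero]
  have : ((w : F), T.adjoint w) = (y.fst, y.snd) := by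
    rw [← hxy]
    exact Prod.ext (by simp [hxdef]) (by simp [hxdef])
  rw [this]
  rw [mem_graph_iff]
  exact ⟨u, hu1, hu2⟩

/-- Triviality of the kernel of `I + R* T` when `T ≤ R`. -/
lemma ker_triv (T R : F →ₗ.[ℂ] E) (hRd : Dense (R.domain : Set F)) (hle : T ≤ R)
    (w : T.domain) (hw : (T w : E) ∈ R.adjoint.domain)
    (heq : (w : F) + R.adjoint ⟨T w, hw⟩ = 0) : (w : F) = 0 := by
  set w' : R.domain := ⟨(w : F), hle.1 w.2⟩ with hw'def
  have hTw : T w = R w' := hle.2 rfl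
  have hinner : ⟪R.adjoint ⟨T w, hw⟩, (w : F)⟫_ℂ = ⟪(T w : E), T w⟫_ℂ := by
    have := LinearPMap.adjoint_isFormalAdjoint hRd (⟨T w, hw⟩ : R.adjoint.domain) w'
    rw [this]
    simp only [hw'def]
    rw [← hTw]
  have h0 : (0 : ℂ) = ⟪(w : F), (w : F)⟫_ℂ + ⟪(T w : E), T w⟫_ℂ := by
    rw [← hinner, ← inner_add_left, heq, inner_zero_left]
  have hre := congrArg (RCLike.re (K := ℂ)) h0
  rw [_root_.map_add, _root_.map_zero, inner_self_eq_norm_sq, inner_self_eq_norm_sq] at hre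
  have hw0 : ‖(w : F)‖ = 0 := by nlinarith [norm_nonneg (w : F), norm_nonneg (T w : E)]
  exact norm_eq_zero.mp hw0

/-- Formal adjointness passes to the closure. -/
lemma closure_isFormalAdjoint (L₀ : E →ₗ.[ℂ] F) (M₀ : F →ₗ.[ℂ] E)
    (h : ∀ (u : L₀.domain) (v : M₀.domain), ⟪L₀ u, (v : F)⟫_ℂ = ⟪(u : E), M₀ v⟫_ℂ)
    (hc : L₀.IsClosable) : L₀.closure.IsFormalAdjoint M₀ := by
  intro u v
  have hmem : ((u : E), L₀.closure u) ∈ L₀.closure.graph := mem_graph _ u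
  rw [← hc.graph_closure_eq_closure_graph] at hmem
  have hsub : (L₀.graph.topologicalClosure : Set (E × F)) ⊆
      {p : E × F | ⟪p.2, (v : F)⟫_ℂ = ⟪p.1, M₀ v⟫_ℂ} := by
    rw [Submodule.topologicalClosure_coe]
    apply closure_minimal
    · rintro p hp
      obtain ⟨u₀, h1, h2⟩ := (mem_graph_iff _).mp hp
      simp only [Set.mem_setOf_eq, ← h1, ← h2]
      exact h u₀ v
    · exact isClosed_eq (continuous_snd.inner continuous_const)
        (continuous_fst.inner continuous_const)
  exact hsub hmem

end Stmt4Aux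

open Stmt4Aux LinearPMap in
/-- Let `L₀ : D₁ → H₂`, `M₀ : D₂ → H₁` be densely defined operators with
`⟪L₀ u, v⟫ = ⟪u, M₀ v⟫` for all `u ∈ D₁`, `v ∈ D₂`, and let `L`, `M` be their closures.
Then `M = L*` and `L = M*` hold if and only if `ker (I_{H₂} + M* L*) = {0}` and
`ker (I_{H₁} + L* M*) = {0}`; here the compositions have their natural domains, e.g.
`dom (M* L*) = {w ∈ dom L* : L* w ∈ dom M*}`, so triviality of `ker (I + M* L*)` is expressed
as: for `w ∈ dom L*` with `L* w ∈ dom M*` and `w + M*(L* w) = 0`, one has `w = 0`. -/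
theorem stmt_4
    {H₁ H₂ : Type*}
    [NormedAddCommGroup H₁] [InnerProductSpace ℂ H₁] [CompleteSpace H₁]
    [NormedAddCommGroup H₂] [InnerProductSpace ℂ H₂] [CompleteSpace H₂]
    (L₀ : H₁ →ₗ.[ℂ] H₂) (M₀ : H₂ →ₗ.[ℂ] H₁)
    (hL₀ : Dense (L₀.domain : Set H₁)) (hM₀ : Dense (M₀.domain : Set H₂))
    (h : ∀ (u : L₀.domain) (v : M₀.domain), ⟪L₀ u, (v : H₂)⟫_ℂ = ⟪(u : H₁), M₀ v⟫_ℂ)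
    (L : H₁ →ₗ.[ℂ] H₂) (M : H₂ →ₗ.[ℂ] H₁)
    (hL : L = L₀.closure) (hM : M = M₀.closure) :
    (M = L.adjoint ∧ L = M.adjoint) ↔
      ((∀ (w : L.adjoint.domain) (hw : (L.adjoint w : H₁) ∈ M.adjoint.domain),
          (w : H₂) + M.adjoint ⟨L.adjoint w, hw⟩ = 0 → (w : H₂) = 0) ∧
       (∀ (w : M.adjoint.domain) (hw : (M.adjoint w : H₂) ∈ L.adjoint.domain),
          (w : H₁) + L.adjoint ⟨M.adjoint w, hw⟩ = 0 → (w : H₁) = 0)) := by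
  subst hL hM
  -- formal adjointness both ways
  have hLfM : L₀.IsFormalAdjoint M₀ := fun u v => h u v
  have hMfL : M₀.IsFormalAdjoint L₀ := hLfM.symm
  -- closability
  have hL₀c : L₀.IsClosable :=
    ((adjoint_isClosed M₀ hM₀).isClosable).leIsClosable (hMfL.le_adjoint hM₀)
  have hM₀c : M₀.IsClosable :=
    ((adjoint_isClosed L₀ hL₀).isClosable).leIsClosable (hLfM.le_adjoint hL₀)
  -- dense domains of closures
  have hLd : Dense ((L₀.closure.domain : Submodule ℂ H₁) : Set H₁) :=
    Dense.mono L₀.le_closure.1 hL₀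
  have hMd : Dense ((M₀.closure.domain : Submodule ℂ H₂) : Set H₂) :=
    Dense.mono M₀.le_closure.1 hM₀
  -- closedness of closures
  have hLcl : L₀.closure.IsClosed := hL₀c.closure_isClosed
  have hMcl : M₀.closure.IsClosed := hM₀c.closure_isClosed
  -- formal adjointness of closures
  have hLM : L₀.closure.IsFormalAdjoint M₀ := closure_isFormalAdjoint L₀ M₀ h hL₀c
  have hML : M₀.closure.IsFormalAdjoint L₀ :=
    closure_isFormalAdjoint M₀ L₀ (fun v u => hMfL v u) hM₀c
  -- containments
  have hMle : M₀.closure ≤ L₀.closure.adjoint := by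
    have h1 : M₀ ≤ L₀.closure.adjoint := hLM.le_adjoint hLd
    have h2 := ((adjoint_isClosed _ hLd).isClosable).closure_mono h1
    rwa [closure_eq_self (adjoint_isClosed _ hLd)] at h2
  have hLle : L₀.closure ≤ M₀.closure.adjoint := by
    have h1 : L₀ ≤ M₀.closure.adjoint := hML.le_adjoint hMd
    have h2 := ((adjoint_isClosed _ hMd).isClosable).closure_mono h1
    rwa [closure_eq_self (adjoint_isClosed _ hMd)] at h2
  constructor
  · rintro ⟨hM', hL'⟩
    constructor
    · intro w hw heq
      exact ker_triv L₀.closure.adjoint M₀.closure hMd (le_of_eq hM'.symm) w hw heq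
    · intro w hw heq
      exact ker_triv M₀.closure.adjoint L₀.closure hLd (le_of_eq hL'.symm) w hw heq
  · rintro ⟨hk1, hk2⟩
    have e1 : L₀.closure.adjoint ≤ M₀.closure :=
      adjoint_le_of_ker L₀.closure M₀.closure hLd hMd hMcl hMle hk2
    have e2 : M₀.closure.adjoint ≤ L₀.closure :=
      adjoint_le_of_ker M₀.closure L₀.closure hMd hLd hLcl hLle hk1
    exact ⟨le_antisymm hMle e1, le_antisymm hLle e2⟩
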